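/- Let Q_j(n) be the number of white balls after n draws in the classical Pólya urn started with 1 black and j white balls. Then for integers j ≤ t ≤ j+n, P[Q_j(n) ≤ t] = ∏_{i=0}^{j-1} (t-i)/(n+j-i). -/

import Mathlib

open Finset

/-- Probability mass function of the number of white balls after `n` draws in the
classical Pólya urn started with `b` black and `w` white balls: each drawn ball is
returned together with one additional ball of the same color. -/
noncomputable def polyaPMF (b w : ℕ) : ℕ → ℕ → ℝ
  | 0 => fun k => if k = w then 1 else 0
  | n + 1 => fun k =>
      polyaPMF b w n k * (1 - (k : ℝ) / ((w + b + n : ℕ) : ℝ)) +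
      polyaPMF b w n (k - 1) * (((k : ℝ) - 1) / ((w + b + n : ℕ) : ℝ))

lemma polyaPMF_eq_zero_of_lt (b w : ℕ) : ∀ n k, k < w → polyaPMF b w n k = 0 := by
  intro n
  induction n with
  | zero => intro k h; simp [polyaPMF, Nat.ne_of_lt h]
  | succ n ih =>
    intro k h
    simp [polyaPMF, ih k h, ih (k - 1) (lt_of_le_of_lt (Nat.pred_le k) h)]

lemma polyaPMF_eq_zero_of_gt (b w : ℕ) : ∀ n k, w + n < k → polyaPMF b w n k = 0 := by
  intro n
  induction n with
  | zero => intro k h; simp at h; simp [polyaPMF, (Nat.ne_of_lt h).symm]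
  | succ n ih =>
    intro k h
    have h1 : w + n < k := by omega
    have h2 : w + n < k - 1 := by omega
    simp [polyaPMF, ih k h1, ih (k - 1) h2]

lemma prod_shift (g : ℕ → ℝ) (j : ℕ) :
    (∏ i ∈ range j, g (i + 1)) * g 0 = (∏ i ∈ range j, g i) * g j := by
  rw [← prod_range_succ', ← prod_range_succ]

lemma prodB (j t : ℕ) :
    (∏ i ∈ range j, ((t : ℝ) - 1 - i)) * (t : ℝ)
      = (∏ i ∈ range j, ((t : ℝ) - i)) * ((t : ℝ) - j) := by
  have key := prod_shift (fun i : ℕ => (t : ℝ) - (i : ℝ)) j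
  have h1 : (∏ i ∈ range j, (fun i : ℕ => (t : ℝ) - (i : ℝ)) (i + 1))
      = ∏ i ∈ range j, ((t : ℝ) - 1 - (i : ℝ)) :=
    prod_congr rfl (fun i _ => by push_cast; ring)
  rw [h1] at key
  norm_num at key
  linear_combination key

lemma prodD (j n : ℕ) :
    (∏ i ∈ range j, ((n : ℝ) + j - i)) * ((n : ℝ) + 1 + j)
      = (∏ i ∈ range j, ((n : ℝ) + 1 + j - i)) * ((n : ℝ) + 1) := by
  have key := prod_shift (fun i : ℕ => (n : ℝ) + 1 + (j : ℝ) - (i : ℝ)) j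
  have h1 : (∏ i ∈ range j, (fun i : ℕ => (n : ℝ) + 1 + (j : ℝ) - (i : ℝ)) (i + 1))
      = ∏ i ∈ range j, ((n : ℝ) + (j : ℝ) - (i : ℝ)) :=
    prod_congr rfl (fun i _ => by push_cast; ring)
  rw [h1] at key
  norm_num at key
  linear_combination key

/-- The one-step recurrence for the CDF. -/
lemma polya_step (j n t : ℕ) (hj : 1 ≤ j) :
    (∑ k ∈ range (t + 1), polyaPMF 1 j (n + 1) k)
      = (∑ k ∈ range (t + 1), polyaPMF 1 j n k)
        - polyaPMF 1 j n t * t / ((j : ℝ) + 1 + n) := by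
  have hM : ((j + 1 + n : ℕ) : ℝ) = (j : ℝ) + 1 + n := by push_cast; ring
  have hpmf : ∀ k, polyaPMF 1 j (n + 1) k
      = polyaPMF 1 j n k * (1 - (k : ℝ) / ((j : ℝ) + 1 + n))
        + polyaPMF 1 j n (k - 1) * (((k : ℝ) - 1) / ((j : ℝ) + 1 + n)) := by
    intro k
    simp only [polyaPMF, hM]
  simp only [hpmf]
  rw [sum_add_distrib]
  have hsh : (∑ k ∈ range (t + 1),
      polyaPMF 1 j n (k - 1) * (((k : ℝ) - 1) / ((j : ℝ) + 1 + n)))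
      = ∑ k ∈ range t, polyaPMF 1 j n k * ((k : ℝ) / ((j : ℝ) + 1 + n)) := by
    rw [sum_range_succ']
    have h0 : polyaPMF 1 j n (0 - 1) = 0 := polyaPMF_eq_zero_of_lt 1 j n 0 hj
    simp only [h0, zero_mul, add_zero]
    apply sum_congr rfl
    intro k _
    have : (k + 1 - 1 : ℕ) = k := rfl
    rw [this]
    push_cast
    ring_nf
  rw [hsh]
  have e1 : (∑ k ∈ range (t + 1), polyaPMF 1 j n k * (1 - (k : ℝ) / ((j : ℝ) + 1 + n)))
      = (∑ k ∈ range (t + 1), polyaPMF 1 j n k)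
        - ∑ k ∈ range (t + 1), polyaPMF 1 j n k * ((k : ℝ) / ((j : ℝ) + 1 + n)) := by
    rw [← sum_sub_distrib]
    apply sum_congr rfl
    intro k _
    ring
  rw [e1, sum_range_succ (f := fun k => polyaPMF 1 j n k * ((k : ℝ) / ((j : ℝ) + 1 + n)))]
  ring

/-- CDF of the classical Pólya urn started with `1` black and `j` white balls:
for `j ≤ t ≤ j + n`, `P[Q_j(n) ≤ t] = ∏_{i=0}^{j-1} (t-i)/(n+j-i)`. -/
theorem polya_cdf (j n t : ℕ) (hj : 1 ≤ j) (hjt : j ≤ t) (htn : t ≤ j + n) :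
    (∑ k ∈ range (t + 1), polyaPMF 1 j n k)
      = ∏ i ∈ range j, ((t : ℝ) - i) / ((n : ℝ) + j - i) := by
  induction n generalizing t with
  | zero =>
    have ht : t = j := le_antisymm (by omega) hjt
    subst ht
    have hL : (∑ k ∈ range (t + 1), polyaPMF 1 t 0 k) = 1 := by
      simp only [polyaPMF]
      rw [sum_ite_eq' (range (t + 1)) t (fun _ => (1 : ℝ))]
      simp
    rw [hL]
    refine (prod_eq_one ?_).symm
    intro i hi
    rw [mem_range] at hi
    have : (t : ℝ) - i ≠ 0 := by
      have : (i : ℝ) < t := by exact_mod_cast hi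
      linarith
    rw [Nat.cast_zero, zero_add]
    exact div_self this
  | succ n ih =>
    rw [polya_step j n t hj]
    have hD : ∀ i ∈ range j, ((n : ℝ) + j - i) ≠ 0 := by
      intro i hi
      rw [mem_range] at hi
      have h1 : (i : ℝ) < j := by exact_mod_cast hi
      have h2 : (0 : ℝ) ≤ n := Nat.cast_nonneg n
      intro h; linarith
    have hD' : ∀ i ∈ range j, ((n : ℝ) + 1 + j - i) ≠ 0 := by
      intro i hi
      rw [mem_range] at hi
      have h1 : (i : ℝ) < j := by exact_mod_cast hi
      have h2 : (0 : ℝ) ≤ n := Nat.cast_nonneg n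
      intro h; linarith
    by_cases h : t ≤ j + n
    · have hS := ih t hjt h
      have hprev : (∑ k ∈ range t, polyaPMF 1 j n k)
          = ∏ i ∈ range j, ((t : ℝ) - 1 - i) / ((n : ℝ) + j - i) := by
        rcases eq_or_lt_of_le hjt with hje | hjl
        · rw [← hje]
          have hL : (∑ k ∈ range j, polyaPMF 1 j n k) = 0 := by
            apply sum_eq_zero
            intro k hk
            exact polyaPMF_eq_zero_of_lt 1 j n k (mem_range.mp hk)
          rw [hL]
          symm
          apply prod_eq_zero (mem_range.mpr (Nat.sub_lt hj one_pos))
          have hc : ((j - 1 : ℕ) : ℝ) = (j : ℝ) - 1 := by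
            rw [Nat.cast_sub hj]; simp
          rw [hc]
          ring_nf
        · have ht1 : 1 ≤ t := le_trans hj hjt
          have hIH := ih (t - 1) (by omega) (by omega)
          rw [Nat.sub_add_cancel ht1] at hIH
          rw [hIH]
          apply prod_congr rfl
          intro i _
          rw [Nat.cast_sub ht1]
          norm_num
      have hp : polyaPMF 1 j n t
          = (∑ k ∈ range (t + 1), polyaPMF 1 j n k) - (∑ k ∈ range t, polyaPMF 1 j n k) := by
        rw [sum_range_succ]; ring
      rw [hp, hS, hprev]
      rw [prod_div_distrib, prod_div_distrib, prod_div_distrib]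
      set A := ∏ i ∈ range j, ((t : ℝ) - i) with hA
      set B := ∏ i ∈ range j, ((t : ℝ) - 1 - i) with hB
      set D := ∏ i ∈ range j, ((n : ℝ) + j - i) with hDdef
      set D' := ∏ i ∈ range j, ((n : ℝ) + 1 + j - i) with hD'def
      have hDne : D ≠ 0 := prod_ne_zero_iff.mpr hD
      have hD'ne : D' ≠ 0 := prod_ne_zero_iff.mpr hD'
      have hMne : (j : ℝ) + 1 + n ≠ 0 := by positivity
      have hBt : B * (t : ℝ) = A * ((t : ℝ) - j) := prodB j t
      have hDD : D * ((n : ℝ) + 1 + j) = D' * ((n : ℝ) + 1) := prodD j n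
      have expand : A / D - (A / D - B / D) * t / ((j : ℝ) + 1 + n)
          = (A * ((j : ℝ) + 1 + n) - (A - B) * t) / (D * ((j : ℝ) + 1 + n)) := by
        field_simp
      have num : A * ((j : ℝ) + 1 + n) - (A - B) * t = A * ((n : ℝ) + 1) := by
        linear_combination hBt
      have hgoal : (∏ i ∈ range j, (((n + 1 : ℕ) : ℝ) + j - i)) = D' := by
        apply prod_congr rfl
        intro i _
        push_cast
        ring
      rw [hgoal, expand, num, div_eq_div_iff (mul_ne_zero hDne hMne) hD'ne]
      linear_combination (-A) * hDD
    · have ht : t = j + n + 1 := by omega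
      subst ht
      have h1 : (∑ k ∈ range (j + n + 1), polyaPMF 1 j n k) = 1 := by
        have := ih (j + n) le_self_add (le_refl _)
        rw [this]
        apply prod_eq_one
        intro i hi
        have hne := hD i hi
        have hc : ((j + n : ℕ) : ℝ) - i = (n : ℝ) + j - i := by push_cast; ring
        rw [hc]
        exact div_self hne
      have h2 : polyaPMF 1 j n (j + n + 1) = 0 :=
        polyaPMF_eq_zero_of_gt 1 j n (j + n + 1) (by omega)
      rw [sum_range_succ, h1, h2]
      simp only [zero_mul, zero_div, add_zero, sub_zero]
      symm
      apply prod_eq_one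
      intro i hi
      have hne := hD' i hi
      have hc1 : ((j + n + 1 : ℕ) : ℝ) - i = (n : ℝ) + 1 + j - i := by push_cast; ring
      have hc2 : ((n + 1 : ℕ) : ℝ) + (j : ℝ) - i = (n : ℝ) + 1 + j - i := by push_cast; ring
      rw [hc1, hc2]
      exact div_self hne
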